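/- arXiv:2006.03142 — 2 statements merged into one kernel-verified Lean document; each statement's English description precedes it below -/
import Mathlib

section
/- Let x be a decision node and i a buyer. (i) If κ_i(x) < t then κ_i(x + e_{−i}) = κ_i(x). (ii) If t > 1 then κ_i(x + e_i) ≥ κ_i(x) − 1. (iii) If t > 1 and κ_i(x) = t then κ_i(x + e_i) = t − 1. -/
open Finset

noncomputable section

/-- The opponent of buyer `i`. -/
def other (i : Fin 2) : Fin 2 := 1 - i

/-- The standard unit vector of buyer `i`: winning one item moves `x` to `x + e i`. -/
def e (i : Fin 2) : Fin 2 → ℕ := Pi.single i 1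

/-- Remaining supply `t(x) = T - x₁ - x₂` at node `x`. -/
def supply (T : ℕ) (x : Fin 2 → ℕ) : ℕ := T - (x 0 + x 1)

/-- `x` is a decision node: `x₁ + x₂ < T`. -/
def IsDecision (T : ℕ) (x : Fin 2 → ℕ) : Prop := x 0 + x 1 < T

/-- Incremental value `v_i(k|x) = v_i(x_i + k)`. -/
def val (v : Fin 2 → ℕ → ℝ) (i : Fin 2) (k : ℕ) (x : Fin 2 → ℕ) : ℝ := v i (x i + k)

/-- Valuations are nonnegative and weakly decreasing. -/
def Admissible (v : Fin 2 → ℕ → ℝ) : Prop := ∀ i k, 0 ≤ v i k ∧ v i (k + 1) ≤ v i k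

/-- Greedy payoff `μ̄_i(k|x) = Σ_{j=1}^k v_i(j|x) - k · v_{-i}(t-k+1|x)`. -/
def gbar (T : ℕ) (v : Fin 2 → ℕ → ℝ) (i : Fin 2) (k : ℕ) (x : Fin 2 → ℕ) : ℝ :=
  (∑ j ∈ Finset.Icc 1 k, val v i j x) - (k : ℝ) * val v (other i) (supply T x - k + 1) x

/-- Greedy utility `μ_i(x) = max_{0 ≤ k ≤ t} μ̄_i(k|x)` (equal to `0` at terminal nodes). -/
def gu (T : ℕ) (v : Fin 2 → ℕ → ℝ) (i : Fin 2) (x : Fin 2 → ℕ) : ℝ :=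
  Finset.sup' (Finset.range (supply T x + 1)) Finset.nonempty_range_add_one
    (fun k => gbar T v i k x)

/-- Greedy demand `κ_i(x)`: the least `k ∈ {0,…,t}` attaining the greedy utility. -/
def gd (T : ℕ) (v : Fin 2 → ℕ → ℝ) (i : Fin 2) (x : Fin 2 → ℕ) : ℕ :=
  sInf {k | k ≤ supply T x ∧ gbar T v i k x = gu T v i x}

/-- Duopsony factor `f_i(x) = max ({k ∈ {1,…,t} : v_i(k|x) > v_{-i}(t-k+1|x)} ∪ {0})`. -/
def df (T : ℕ) (v : Fin 2 → ℕ → ℝ) (i : Fin 2) (x : Fin 2 → ℕ) : ℕ :=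
  sSup {k | 1 ≤ k ∧ k ≤ supply T x ∧
    val v (other i) (supply T x - k + 1) x < val v i k x}

/-- Baseline price `β_i(x)`. -/
def base (T : ℕ) (v : Fin 2 → ℕ → ℝ) (i : Fin 2) (x : Fin 2 → ℕ) : ℝ :=
  if df T v i x = 0 then val v i 1 x
  else val v (other i) (supply T x - gd T v i x + 1) x

/-- Threshold price `p_i(x) = v_i(1|x) + μ_i(x+e_i) - μ_i(x+e_{-i})`. -/
def tp (T : ℕ) (v : Fin 2 → ℕ → ℝ) (i : Fin 2) (x : Fin 2 → ℕ) : ℝ :=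
  val v i 1 x + gu T v i (x + e i) - gu T v i (x + e (other i))

lemma other_ne (i : Fin 2) : other i ≠ i := by fin_cases i <;> decide

lemma v_anti {v : Fin 2 → ℕ → ℝ} (hv : Admissible v) (i : Fin 2) {m n : ℕ} (h : m ≤ n) :
    v i n ≤ v i m :=
  antitone_nat_of_succ_le (fun k => (hv i k).2) h

lemma supply_add (T : ℕ) (x : Fin 2 → ℕ) (j : Fin 2) :
    supply T (x + e j) = supply T x - 1 := by
  have h : e j 0 + e j 1 = 1 := by fin_cases j <;> simp [e]
  simp only [supply, Pi.add_apply]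
  omega

lemma apply_self (x : Fin 2 → ℕ) (i : Fin 2) : (x + e i) i = x i + 1 := by
  simp [e, Pi.single_eq_same]

lemma apply_other (x : Fin 2 → ℕ) (i : Fin 2) : (x + e (other i)) i = x i := by
  simp [e, Pi.single_eq_of_ne (other_ne i).symm]

lemma apply_other' (x : Fin 2 → ℕ) (i : Fin 2) : (x + e i) (other i) = x (other i) := by
  simp [e, Pi.single_eq_of_ne (other_ne i)]

lemma apply_other'' (x : Fin 2 → ℕ) (i : Fin 2) :
    (x + e (other i)) (other i) = x (other i) + 1 := by
  simp [e, Pi.single_eq_same]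

lemma gbar_other (T : ℕ) (v : Fin 2 → ℕ → ℝ) (i : Fin 2) (k : ℕ) (x : Fin 2 → ℕ)
    (hk : k + 1 ≤ supply T x) :
    gbar T v i k (x + e (other i)) = gbar T v i k x := by
  unfold gbar _root_.val
  rw [supply_add]
  simp only [apply_other, apply_other'']
  have h2 : x (other i) + 1 + (supply T x - 1 - k + 1) = x (other i) + (supply T x - k + 1) := by
    omega
  rw [h2]

lemma sum_shift (f : ℕ → ℝ) (k : ℕ) :
    ∑ j ∈ Finset.Icc 1 k, f (j + 1) = ∑ j ∈ Finset.Icc 1 (k + 1), f j - f 1 := by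
  induction k with
  | zero => simp
  | succ n ih =>
    rw [Finset.sum_Icc_succ_top (by omega), Finset.sum_Icc_succ_top (by omega : 1 ≤ n + 1 + 1), ih]
    ring

lemma gbar_self (T : ℕ) (v : Fin 2 → ℕ → ℝ) (i : Fin 2) (k : ℕ) (x : Fin 2 → ℕ)
    (hk : k + 1 ≤ supply T x) :
    gbar T v i k (x + e i) =
      gbar T v i (k + 1) x - val v i 1 x + val v (other i) (supply T x - k) x := by
  unfold gbar _root_.val
  rw [supply_add]
  simp only [apply_self, apply_other']
  have hsum : ∑ j ∈ Finset.Icc 1 k, v i (x i + 1 + j)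
      = ∑ j ∈ Finset.Icc 1 (k + 1), v i (x i + j) - v i (x i + 1) := by
    have h := sum_shift (fun m => v i (x i + m)) k
    rw [← h]
    exact Finset.sum_congr rfl fun j _ => by rw [show x i + 1 + j = x i + (j + 1) by omega]
  rw [hsum]
  have h1 : x (other i) + (supply T x - 1 - k + 1) = x (other i) + (supply T x - k) := by omega
  have h2 : supply T x - (k + 1) + 1 = supply T x - k := by omega
  rw [h1, h2]
  push_cast
  ring

lemma gbar_le_gu (T : ℕ) (v : Fin 2 → ℕ → ℝ) (i : Fin 2) {k : ℕ} (x : Fin 2 → ℕ)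
    (hk : k ≤ supply T x) : gbar T v i k x ≤ gu T v i x :=
  Finset.le_sup' (fun k => gbar T v i k x) (Finset.mem_range.mpr (Nat.lt_succ_of_le hk))

lemma gd_spec (T : ℕ) (v : Fin 2 → ℕ → ℝ) (i : Fin 2) (x : Fin 2 → ℕ) :
    gd T v i x ≤ supply T x ∧ gbar T v i (gd T v i x) x = gu T v i x := by
  have hne : {k | k ≤ supply T x ∧ gbar T v i k x = gu T v i x}.Nonempty := by
    obtain ⟨b, hb, hb'⟩ := Finset.exists_mem_eq_sup' (Finset.nonempty_range_add_one)
      (fun k => gbar T v i k x)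
    exact ⟨b, Finset.mem_range_succ_iff.mp hb, hb'.symm⟩
  exact Nat.sInf_mem hne

lemma gd_le (T : ℕ) (v : Fin 2 → ℕ → ℝ) (i : Fin 2) {k : ℕ} (x : Fin 2 → ℕ)
    (hk : k ≤ supply T x) (h : gbar T v i k x = gu T v i x) :
    gd T v i x ≤ k := Nat.sInf_le ⟨hk, h⟩

lemma lt_gd (T : ℕ) (v : Fin 2 → ℕ → ℝ) (i : Fin 2) {k : ℕ} (x : Fin 2 → ℕ)
    (hk : k ≤ supply T x) (h : k < gd T v i x) :
    gbar T v i k x < gu T v i x := by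
  have hn := Nat.notMem_of_lt_sInf h
  have hle := gbar_le_gu T v i x hk
  rcases lt_or_eq_of_le hle with h' | h'
  · exact h'
  · exact absurd ⟨hk, h'⟩ hn

/-- Evolution of the greedy demand. -/
theorem stmt4 (T : ℕ) (v : Fin 2 → ℕ → ℝ) (hv : Admissible v)
    (x : Fin 2 → ℕ) (hx : IsDecision T x) (i : Fin 2) :
    (gd T v i x < supply T x → gd T v i (x + e (other i)) = gd T v i x) ∧
    (1 < supply T x → gd T v i (x + e i) ≥ gd T v i x - 1) ∧
    (1 < supply T x → gd T v i x = supply T x →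
      gd T v i (x + e i) = supply T x - 1) := by
  have ht : 1 ≤ supply T x := by
    unfold IsDecision at hx; unfold supply; omega
  have key : 1 < supply T x → gd T v i x - 1 ≤ gd T v i (x + e i) := by
    intro ht1
    by_contra hcon
    push_neg at hcon
    set y := x + e i with hy
    have hsy : supply T y = supply T x - 1 := supply_add T x i
    obtain ⟨hκle, hκeq⟩ := gd_spec T v i x
    obtain ⟨hκ'le, hκ'eq⟩ := gd_spec T v i y
    set κ := gd T v i x with hκdef
    set κ' := gd T v i y with hκ'def
    have h1 : κ' + 1 < κ := by omega
    have hstrict : gbar T v i (κ' + 1) x < gu T v i x :=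
      lt_gd T v i x (by omega) (by omega)
    have h2 : gbar T v i (κ - 1) y ≤ gbar T v i κ' y := by
      rw [hκ'eq]; exact gbar_le_gu T v i y (by omega)
    have e1 : gbar T v i κ' y = gbar T v i (κ' + 1) x - val v i 1 x
        + val v (other i) (supply T x - κ') x := gbar_self T v i κ' x (by omega)
    have e2 : gbar T v i (κ - 1) y = gbar T v i κ x - val v i 1 x
        + val v (other i) (supply T x - (κ - 1)) x := by
      have h := gbar_self T v i (κ - 1) x (by omega)
      rwa [show κ - 1 + 1 = κ by omega] at h
    have hmono : val v (other i) (supply T x - κ') x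
        ≤ val v (other i) (supply T x - (κ - 1)) x := by
      unfold _root_.val
      exact v_anti hv (other i) (by omega)
    rw [hκeq] at e2
    linarith
  refine ⟨?_, fun h => key h, fun ht1 hκx => ?_⟩
  · intro h
    set y := x + e (other i) with hy
    have hsy : supply T y = supply T x - 1 := supply_add T x (other i)
    obtain ⟨hκle, hκeq⟩ := gd_spec T v i x
    have hκt : gd T v i x + 1 ≤ supply T x := h
    have hguy : gu T v i y = gu T v i x := by
      apply le_antisymm
      · obtain ⟨hle', heq'⟩ := gd_spec T v i y
        rw [← heq', gbar_other T v i _ x (by omega)]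
        exact gbar_le_gu T v i x (by omega)
      · rw [← hκeq, ← gbar_other T v i _ x (by omega)]
        exact gbar_le_gu T v i y (by omega)
    apply le_antisymm
    · exact gd_le T v i y (by omega)
        (by rw [gbar_other T v i _ x (by omega), hκeq, hguy])
    · obtain ⟨hle', heq'⟩ := gd_spec T v i y
      apply gd_le T v i x (by omega)
      rw [← gbar_other T v i _ x (by omega), heq', hguy]
  · obtain ⟨hκ'le, _⟩ := gd_spec T v i (x + e i)
    have hsy := supply_add T x i
    have hk := key ht1
    omega
end
end

section
/- For every decision node x and every buyer i, the threshold price is at least the baseline price: p_i(x) ≥ β_i(x). -/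
open Finset

noncomputable section

lemma e_sum (j : Fin 2) : e j 0 + e j 1 = 1 := by
  fin_cases j <;> simp [e, Pi.single_apply]

/-- The threshold price is at least the baseline price. -/
theorem stmt5 (T : ℕ) (v : Fin 2 → ℕ → ℝ) (hv : Admissible v)
    (x : Fin 2 → ℕ) (hx : IsDecision T x) (i : Fin 2) :
    base T v i x ≤ tp T v i x := by
  have hanti : ∀ j : Fin 2, ∀ a b : ℕ, a ≤ b → v j b ≤ v j a := fun j a b hab =>
    antitone_nat_of_succ_le (fun n => (hv j n).2) hab
  have hvalanti : ∀ (j : Fin 2) (a b : ℕ), a ≤ b → _root_.val v j b x ≤ _root_.val v j a x := by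
    intro j a b h
    unfold _root_.val
    exact hanti j _ _ (by omega)
  have ht1 : 1 ≤ supply T x := by
    unfold IsDecision at hx; unfold supply; omega
  have hxi : (x + e i) i = x i + 1 := by
    simp [e, Pi.single_eq_same]
  have hxio : (x + e i) (other i) = x (other i) := by
    simp [e, Pi.single_eq_of_ne (other_ne i)]
  have hxo : (x + e (other i)) (other i) = x (other i) + 1 := by
    simp [e, Pi.single_eq_same]
  have hxoi : (x + e (other i)) i = x i := by
    have hne : i ≠ other i := (other_ne i).symm
    simp [e, Pi.single_eq_of_ne hne]
  have hsy : supply T (x + e i) = supply T x - 1 := supply_add T x i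
  have hsz : supply T (x + e (other i)) = supply T x - 1 := supply_add T x (other i)
  have hvy_i : ∀ k, _root_.val v i k (x + e i) = _root_.val v i (k + 1) x := by
    intro k; unfold _root_.val; rw [hxi]; congr 1; omega
  have hvy_o : ∀ k, _root_.val v (other i) k (x + e i) = _root_.val v (other i) k x := by
    intro k; unfold _root_.val; rw [hxio]
  have hvz_i : ∀ k, _root_.val v i k (x + e (other i)) = _root_.val v i k x := by
    intro k; unfold _root_.val; rw [hxoi]
  have hvz_o : ∀ k, _root_.val v (other i) k (x + e (other i)) = _root_.val v (other i) (k + 1) x := by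
    intro k; unfold _root_.val; rw [hxo]; congr 1; omega
  -- gbar at z agrees with gbar at x for k ≤ t - 1
  have hgz : ∀ k, k ≤ supply T x - 1 →
      gbar T v i k (x + e (other i)) = gbar T v i k x := by
    intro k hk
    unfold gbar
    rw [hsz, hvz_o,
      show supply T x - 1 - k + 1 + 1 = supply T x - k + 1 from by omega]
    congr 1
    exact Finset.sum_congr rfl fun j _ => hvz_i j
  have hle_gu : ∀ k, k ≤ supply T x → gbar T v i k x ≤ gu T v i x := by
    intro k hk
    unfold gu
    exact Finset.le_sup' (fun k => gbar T v i k x) (Finset.mem_range.mpr (by omega))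
  have hguz_le : gu T v i (x + e (other i)) ≤ gu T v i x := by
    unfold gu
    apply Finset.sup'_le
    intro k hk
    rw [Finset.mem_range, hsz] at hk
    rw [hgz k (by omega)]
    exact Finset.le_sup' (fun k => gbar T v i k x) (Finset.mem_range.mpr (by omega))
  have hgbar0 : ∀ y : Fin 2 → ℕ, gbar T v i 0 y = 0 := by
    intro y; simp [gbar]
  have hgy0 : (0 : ℝ) ≤ gu T v i (x + e i) := by
    unfold gu
    rw [← hgbar0 (x + e i)]
    exact Finset.le_sup' (fun k => gbar T v i k (x + e i))
      (Finset.mem_range.mpr (Nat.succ_pos _))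
  by_cases hdf : df T v i x = 0
  · -- f = 0 : all gbar at x are ≤ 0
    have hdf' : sSup {k | 1 ≤ k ∧ k ≤ supply T x ∧
       _root_.val v (other i) (supply T x - k + 1) x < _root_.val v i k x} = 0 := hdf
    have hle : ∀ k, 1 ≤ k → k ≤ supply T x →
       _root_.val v i k x ≤ _root_.val v (other i) (supply T x - k + 1) x := by
      intro k hk1 hkt
      by_contra h
      push_neg at h
      have hmem : k ∈ {k | 1 ≤ k ∧ k ≤ supply T x ∧
         _root_.val v (other i) (supply T x - k + 1) x < _root_.val v i k x} := ⟨hk1, hkt, h⟩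
      have hbdd : BddAbove {k | 1 ≤ k ∧ k ≤ supply T x ∧
         _root_.val v (other i) (supply T x - k + 1) x < _root_.val v i k x} :=
        ⟨supply T x, fun m hm => hm.2.1⟩
      have := le_csSup hbdd hmem
      omega
    have hgb : ∀ k, k ≤ supply T x → gbar T v i k x ≤ 0 := by
      intro k hk
      unfold gbar
      have hsum : ∑ j ∈ Finset.Icc 1 k, _root_.val v i j x
          ≤ (k : ℝ) * _root_.val v (other i) (supply T x - k + 1) x := by
        calc ∑ j ∈ Finset.Icc 1 k, _root_.val v i j x
            ≤ ∑ _j ∈ Finset.Icc 1 k, _root_.val v (other i) (supply T x - k + 1) x := by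
              apply Finset.sum_le_sum
              intro j hj
              rw [Finset.mem_Icc] at hj
              calc _root_.val v i j x ≤ _root_.val v (other i) (supply T x - j + 1) x :=
                    hle j hj.1 (le_trans hj.2 hk)
                _ ≤ _root_.val v (other i) (supply T x - k + 1) x :=
                    hvalanti _ _ _ (by omega)
          _ = (k : ℝ) * _root_.val v (other i) (supply T x - k + 1) x := by
              rw [Finset.sum_const, Nat.card_Icc, nsmul_eq_mul]
              norm_num
      linarith
    have hguz0 : gu T v i (x + e (other i)) ≤ 0 := by
      unfold gu
      apply Finset.sup'_le
      intro k hk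
      rw [Finset.mem_range, hsz] at hk
      rw [hgz k (by omega)]
      exact hgb k (by omega)
    unfold base tp
    rw [if_pos hdf]
    linarith
  · -- f > 0
    have hbdd : BddAbove {k | 1 ≤ k ∧ k ≤ supply T x ∧
       _root_.val v (other i) (supply T x - k + 1) x < _root_.val v i k x} :=
      ⟨supply T x, fun m hm => hm.2.1⟩
    have hdf' : sSup {k | 1 ≤ k ∧ k ≤ supply T x ∧
       _root_.val v (other i) (supply T x - k + 1) x < _root_.val v i k x} ≠ 0 := hdf
    have hSne : {k | 1 ≤ k ∧ k ≤ supply T x ∧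
       _root_.val v (other i) (supply T x - k + 1) x < _root_.val v i k x}.Nonempty := by
      rcases Set.eq_empty_or_nonempty {k | 1 ≤ k ∧ k ≤ supply T x ∧
         _root_.val v (other i) (supply T x - k + 1) x < _root_.val v i k x} with h | h
      · exact absurd (by simp [h]) hdf'
      · exact h
    obtain ⟨hf1, hft, hfv⟩ := Nat.sSup_mem hSne hbdd
    -- greedy demand facts
    obtain ⟨k0, hk0r, hk0⟩ :=
      Finset.exists_mem_eq_sup' (Finset.nonempty_range_add_one (n := supply T x))
        (fun k => gbar T v i k x)
    have hMne : {k | k ≤ supply T x ∧ gbar T v i k x = gu T v i x}.Nonempty :=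
      ⟨k0, Nat.lt_succ_iff.mp (Finset.mem_range.mp hk0r), hk0.symm⟩
    obtain ⟨hκt, hκeq⟩ : gd T v i x ≤ supply T x ∧
        gbar T v i (gd T v i x) x = gu T v i x := Nat.sInf_mem hMne
    -- gbar 1 > 0
    have hgb1 : 0 < gbar T v i 1 x := by
      unfold gbar
      rw [Finset.Icc_self, Finset.sum_singleton]
      have h1 : _root_.val v (other i) (supply T x - 1 + 1) x
          ≤ _root_.val v (other i) (supply T x - sSup {k | 1 ≤ k ∧ k ≤ supply T x ∧
           _root_.val v (other i) (supply T x - k + 1) x < _root_.val v i k x} + 1) x :=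
        hvalanti _ _ _ (by omega)
      have h2 : _root_.val v i (sSup {k | 1 ≤ k ∧ k ≤ supply T x ∧
         _root_.val v (other i) (supply T x - k + 1) x < _root_.val v i k x}) x ≤ _root_.val v i 1 x :=
        hvalanti _ _ _ hf1
      push_cast
      linarith
    have hκ1 : 1 ≤ gd T v i x := by
      by_contra h
      have h0 : gd T v i x = 0 := by omega
      rw [h0, hgbar0 x] at hκeq
      have := hle_gu 1 ht1
      linarith
    -- the key identity at y
    have hgy_eq : _root_.val v i 1 x + gbar T v i (gd T v i x - 1) (x + e i)
        = gbar T v i (gd T v i x) x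
          + _root_.val v (other i) (supply T x - gd T v i x + 1) x := by
      unfold gbar
      rw [hsy, hvy_o]
      have hpr : supply T x - 1 - (gd T v i x - 1) + 1 = supply T x - gd T v i x + 1 := by
        omega
      rw [hpr]
      have hsum : ∑ j ∈ Finset.Icc 1 (gd T v i x), _root_.val v i j x
          = _root_.val v i 1 x + ∑ j ∈ Finset.Icc 1 (gd T v i x - 1), _root_.val v i j (x + e i) := by
        rw [← Finset.Ico_add_one_right_eq_Icc, ← Finset.Ico_add_one_right_eq_Icc,
          Finset.sum_Ico_eq_sum_range, Finset.sum_Ico_eq_sum_range]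
        simp only [Nat.add_sub_cancel]
        have hs := Finset.sum_range_succ' (fun j => _root_.val v i (1 + j) x) (gd T v i x - 1)
        rw [show gd T v i x - 1 + 1 = gd T v i x by omega] at hs
        rw [hs, add_comm]
        congr 1
        apply Finset.sum_congr rfl
        intro j _
        rw [hvy_i]
        congr 1
      rw [hsum]
      have hcast : ((gd T v i x - 1 : ℕ) : ℝ) = (gd T v i x : ℝ) - 1 := by
        rw [Nat.cast_sub hκ1]; norm_num
      rw [hcast]
      ring
    have hyb : gbar T v i (gd T v i x - 1) (x + e i) ≤ gu T v i (x + e i) := by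
      unfold gu
      refine Finset.le_sup' (fun k => gbar T v i k (x + e i)) ?_
      rw [Finset.mem_range, hsy]
      omega
    unfold base tp
    rw [if_neg hdf]
    linarith

end
end
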